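/- arXiv:2206.12701 — 2 statements merged into one kernel-verified Lean document; each statement's English description precedes it below -/
import Mathlib

section
/- If the sample mean p̄_n is a consistent estimator of p under the bandwagon rating process (i.e., p̄_n → p in probability), then Σ_{i=1}^{∞} λ_i² = ∞. -/
open MeasureTheory ProbabilityTheory Finset Filter

/-- Sample mean of the first `n` ratings (ratings are indexed from 1). -/
noncomputable def pbar {Ω : Type*} (r : ℕ → Ω → ℝ) (n : ℕ) (ω : Ω) : ℝ :=
  (∑ i ∈ Finset.Icc 1 n, r i ω) / n

/-- σ-algebra generated by the first `n` ratings. -/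
def ratingsAlg {Ω : Type*} (r : ℕ → Ω → ℝ) (n : ℕ) : MeasurableSpace Ω :=
  ⨆ i ∈ Finset.Icc 1 n, MeasurableSpace.comap (r i) (inferInstance : MeasurableSpace ℝ)

/-- The bandwagon rating process of Xie et al., as used in the paper. -/
structure Bandwagon {Ω : Type*} [MeasurableSpace Ω] (μ : Measure Ω)
    (p : ℝ) (lam : ℕ → ℝ) (r : ℕ → Ω → ℝ) : Prop where
  prob : IsProbabilityMeasure μ
  hp : 0 < p ∧ p < 1
  hlam1 : lam 1 = 1
  hlam_nonneg : ∀ n, 1 ≤ n → 0 ≤ lam n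
  hlam_mono : ∀ n, 2 ≤ n → lam n ≤ lam (n - 1)
  hmeas : ∀ n, Measurable (r n)
  hbin : ∀ n, 1 ≤ n → ∀ ω, r n ω = 0 ∨ r n ω = 1
  hfirst : ∫ ω, r 1 ω ∂μ = p
  hcond : ∀ n, 2 ≤ n →
    μ[r n | ratingsAlg r (n - 1)] =ᵐ[μ]
      fun ω => lam n * p + (1 - lam n) * pbar r (n - 1) ω

/-- Affine-corrected rating `r̂ᵢ`. -/
noncomputable def rhat {Ω : Type*} (r : ℕ → Ω → ℝ) (lam : ℕ → ℝ) (i : ℕ) (ω : Ω) : ℝ :=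
  (r i ω - (1 - lam i) * pbar r (i - 1) ω) / lam i

section Aux
variable {Ω : Type*} [m0 : MeasurableSpace Ω] {μ : Measure Ω} {r : ℕ → Ω → ℝ}

lemma BW.ralg_le (hmeas : ∀ n, Measurable (r n)) (n : ℕ) : ratingsAlg r n ≤ m0 :=
  iSup₂_le fun i _ => measurable_iff_comap_le.mp (hmeas i)

omit m0 in
lemma BW.r_meas_ralg {n i : ℕ} (hi : i ∈ Finset.Icc 1 n) :
    Measurable[ratingsAlg r n] (r i) :=
  measurable_iff_comap_le.mpr (le_iSup₂_of_le i hi le_rfl)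

omit m0 in
lemma BW.pbar_meas_ralg (n : ℕ) : Measurable[ratingsAlg r n] (pbar r n) := by
  unfold pbar
  exact (Finset.measurable_sum _ fun i hi => BW.r_meas_ralg hi).div_const _

lemma BW.pbar_meas (hmeas : ∀ n, Measurable (r n)) (n : ℕ) : Measurable (pbar r n) :=
  (BW.pbar_meas_ralg n).mono (BW.ralg_le hmeas n) le_rfl

lemma BW.integrable_of_bdd [IsFiniteMeasure μ] {f : Ω → ℝ} (hf : Measurable f) (C : ℝ)
    (h : ∀ ω, |f ω| ≤ C) : Integrable f μ :=
  ⟨hf.aestronglyMeasurable, HasFiniteIntegral.of_bounded (C := C)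
    (ae_of_all _ fun ω => by simpa [Real.norm_eq_abs] using h ω)⟩

omit m0 in
lemma BW.pbar_mem (hbin : ∀ n, 1 ≤ n → ∀ ω, r n ω = 0 ∨ r n ω = 1) (n : ℕ) (ω : Ω) :
    0 ≤ pbar r n ω ∧ pbar r n ω ≤ 1 := by
  have h0 : ∀ i ∈ Finset.Icc 1 n, (0:ℝ) ≤ r i ω := by
    intro i hi
    rcases hbin i (Finset.mem_Icc.mp hi).1 ω with h | h <;> simp [h]
  have h1 : ∀ i ∈ Finset.Icc 1 n, r i ω ≤ 1 := by
    intro i hi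
    rcases hbin i (Finset.mem_Icc.mp hi).1 ω with h | h <;> simp [h]
  have hs0 : (0:ℝ) ≤ ∑ i ∈ Finset.Icc 1 n, r i ω := Finset.sum_nonneg h0
  have hs1 : ∑ i ∈ Finset.Icc 1 n, r i ω ≤ n := by
    calc ∑ i ∈ Finset.Icc 1 n, r i ω ≤ ∑ i ∈ Finset.Icc 1 n, (1:ℝ) := Finset.sum_le_sum h1
    _ = n := by simp [Nat.card_Icc]
  constructor
  · exact div_nonneg hs0 (Nat.cast_nonneg n)
  · rcases Nat.eq_zero_or_pos n with h | h
    · simp [pbar, h]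
    · rw [pbar, div_le_one (by exact_mod_cast h)]
      exact hs1

omit m0 in
lemma BW.pbar_succ (n : ℕ) (ω : Ω) :
    pbar r (n+1) ω = ((n:ℝ) * pbar r n ω + r (n+1) ω) / ((n:ℝ)+1) := by
  unfold pbar
  rw [Finset.sum_Icc_succ_top (by omega)]
  rcases Nat.eq_zero_or_pos n with h | h
  · subst h; simp
  · rw [mul_div_cancel₀ _ (by exact_mod_cast h.ne' : (n:ℝ) ≠ 0)]
    push_cast; ring_nf

end Aux

section Main
variable {Ω : Type*} [m0 : MeasurableSpace Ω] {μ : Measure Ω} {p : ℝ} {lam : ℕ → ℝ}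
  {r : ℕ → Ω → ℝ}

lemma BW.int_r (hbw : Bandwagon μ p lam r) {n : ℕ} (hn : 1 ≤ n) :
    Integrable (r n) μ := by
  haveI := hbw.prob
  refine BW.integrable_of_bdd (hbw.hmeas n) 1 fun ω => ?_
  rcases hbw.hbin n hn ω with h | h <;> simp [h]

lemma BW.int_pbar (hbw : Bandwagon μ p lam r) (n : ℕ) :
    Integrable (pbar r n) μ := by
  haveI := hbw.prob
  refine BW.integrable_of_bdd (BW.pbar_meas hbw.hmeas n) 1 fun ω => ?_
  obtain ⟨h0, h1⟩ := BW.pbar_mem hbw.hbin n ω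
  rw [abs_le]; constructor <;> linarith

lemma BW.mean (hbw : Bandwagon μ p lam r) :
    ∀ n, 1 ≤ n → (∫ ω, r n ω ∂μ = p ∧ ∫ ω, pbar r n ω ∂μ = p) := by
  haveI := hbw.prob
  intro n hn
  induction n, hn using Nat.le_induction with
  | base =>
    refine ⟨hbw.hfirst, ?_⟩
    have : ∀ ω, pbar r 1 ω = r 1 ω := by intro ω; simp [pbar]
    rw [integral_congr_ae (ae_of_all _ this), hbw.hfirst]
  | succ n hn ih =>
    have hm := BW.ralg_le hbw.hmeas n
    have hcond := hbw.hcond (n+1) (by omega)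
    simp only [Nat.add_sub_cancel] at hcond
    have hint : Integrable (r (n+1)) μ := BW.int_r hbw (by omega)
    have h1 : ∫ ω, r (n+1) ω ∂μ = p := by
      rw [← integral_condExp hm (f := r (n+1)), integral_congr_ae hcond]
      rw [integral_add (integrable_const _) ((BW.int_pbar hbw n).const_mul _),
        integral_const, integral_const_mul, ih.2]
      simp; ring
    refine ⟨h1, ?_⟩
    have : ∀ ω, pbar r (n+1) ω = ((n:ℝ) * pbar r n ω + r (n+1) ω) / ((n:ℝ)+1) :=
      fun ω => BW.pbar_succ n ω
    rw [integral_congr_ae (ae_of_all _ this)]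
    rw [integral_div, integral_add ((BW.int_pbar hbw n).const_mul _) hint,
      integral_const_mul, ih.2, h1]
    field_simp

end Main

section Main2
variable {Ω : Type*} [m0 : MeasurableSpace Ω] {μ : Measure Ω} {p : ℝ} {lam : ℕ → ℝ}
  {r : ℕ → Ω → ℝ}

lemma BW.int_sq (hbw : Bandwagon μ p lam r) {n : ℕ} (hn : 1 ≤ n) :
    ∫ ω, (r n ω - p)^2 ∂μ = p * (1-p) := by
  haveI := hbw.prob
  have hpt : ∀ ω, (r n ω - p)^2 = (1 - 2*p) * r n ω + p^2 := by
    intro ω; rcases hbw.hbin n hn ω with h | h <;> rw [h] <;> ring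
  rw [integral_congr_ae (ae_of_all _ hpt),
    integral_add ((BW.int_r hbw hn).const_mul _) (integrable_const _),
    integral_const_mul, (BW.mean hbw n hn).1, integral_const]
  simp; ring

lemma BW.intX (hbw : Bandwagon μ p lam r) (n : ℕ) :
    Integrable (fun ω => pbar r n ω - p) μ := by
  haveI := hbw.prob
  exact (BW.int_pbar hbw n).sub (integrable_const _)

lemma BW.intX0 (hbw : Bandwagon μ p lam r) {n : ℕ} (hn : 1 ≤ n) :
    ∫ ω, (pbar r n ω - p) ∂μ = 0 := by
  haveI := hbw.prob
  rw [integral_sub (BW.int_pbar hbw n) (integrable_const _), (BW.mean hbw n hn).2,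
    integral_const]
  simp

lemma BW.intXsq (hbw : Bandwagon μ p lam r) (n : ℕ) :
    Integrable (fun ω => (pbar r n ω - p)^2) μ := by
  haveI := hbw.prob
  refine BW.integrable_of_bdd (((BW.pbar_meas hbw.hmeas n).sub measurable_const).pow
    measurable_const) 4 fun ω => ?_
  obtain ⟨h0, h1⟩ := BW.pbar_mem hbw.hbin n ω
  obtain ⟨hp0, hp1⟩ := hbw.hp
  rw [abs_le]; constructor <;> nlinarith

lemma BW.cross (hbw : Bandwagon μ p lam r) {n : ℕ} (hn : 1 ≤ n) :
    ∫ ω, (pbar r n ω - p) * (r (n+1) ω - p) ∂μ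
      = (1 - lam (n+1)) * ∫ ω, (pbar r n ω - p)^2 ∂μ := by
  haveI := hbw.prob
  obtain ⟨hp0, hp1⟩ := hbw.hp
  have hm : ratingsAlg r n ≤ m0 := BW.ralg_le hbw.hmeas n
  set X : Ω → ℝ := fun ω => pbar r n ω - p with hX
  have hXm : Measurable X := (BW.pbar_meas hbw.hmeas n).sub measurable_const
  have hXb : ∀ ω, |X ω| ≤ 2 := by
    intro ω
    obtain ⟨h0, h1⟩ := BW.pbar_mem hbw.hbin n ω
    rw [abs_le]; constructor <;> simp only [hX] <;> linarith
  have hXsm : StronglyMeasurable[ratingsAlg r n] X :=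
    ((BW.pbar_meas_ralg n).sub measurable_const).stronglyMeasurable
  have hrint : Integrable (r (n+1)) μ := BW.int_r hbw (by omega)
  have hrb : ∀ ω, |r (n+1) ω| ≤ 1 := by
    intro ω; rcases hbw.hbin (n+1) (by omega) ω with h | h <;> simp [h]
  have hfg : Integrable (X * r (n+1)) μ := by
    refine BW.integrable_of_bdd (hXm.mul (hbw.hmeas (n+1))) 2 fun ω => ?_
    calc |(X * r (n+1)) ω| = |X ω| * |r (n+1) ω| := abs_mul _ _
    _ ≤ 2 * 1 := mul_le_mul (hXb ω) (hrb ω) (abs_nonneg _) (by norm_num)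
    _ = 2 := by norm_num
  have hfg' : Integrable (fun ω => X ω * r (n+1) ω) μ := hfg
  have hpull : μ[X * r (n+1) | ratingsAlg r n] =ᵐ[μ] X * μ[r (n+1) | ratingsAlg r n] :=
    condExp_mul_of_stronglyMeasurable_left hXsm hfg hrint
  have hcond := hbw.hcond (n+1) (by omega)
  simp only [Nat.add_sub_cancel] at hcond
  have h1 : ∫ ω, X ω * r (n+1) ω ∂μ
      = ∫ ω, X ω * (lam (n+1) * p + (1 - lam (n+1)) * pbar r n ω) ∂μ := by
    have e1 : ∫ ω, X ω * r (n+1) ω ∂μ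
        = ∫ ω, (μ[X * r (n+1) | ratingsAlg r n]) ω ∂μ :=
      (integral_condExp hm (f := X * r (n+1))).symm
    rw [e1, integral_congr_ae hpull]
    refine integral_congr_ae ?_
    filter_upwards [hcond] with ω h
    simp only [Pi.mul_apply, h]
  have hX0 : ∫ ω, X ω ∂μ = 0 := BW.intX0 hbw hn
  have hpt2 : ∀ ω, X ω * (lam (n+1) * p + (1 - lam (n+1)) * pbar r n ω)
      = (1 - lam (n+1)) * (X ω)^2 + p * X ω := by
    intro ω; simp only [hX]; ring
  have h2 : ∫ ω, X ω * (lam (n+1) * p + (1 - lam (n+1)) * pbar r n ω) ∂μ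
      = (1 - lam (n+1)) * ∫ ω, (X ω)^2 ∂μ := by
    have ia : Integrable (fun ω => (1 - lam (n+1)) * (X ω)^2) μ :=
      (BW.intXsq hbw n).const_mul _
    have ib : Integrable (fun ω => p * X ω) μ := (BW.intX hbw n).const_mul _
    rw [integral_congr_ae (ae_of_all _ hpt2), integral_add ia ib,
      integral_const_mul, integral_const_mul, hX0]
    ring
  have hpt3 : ∀ ω, X ω * (r (n+1) ω - p) = X ω * r (n+1) ω - p * X ω := by
    intro ω; ring
  have ic : Integrable (fun ω => p * X ω) μ := (BW.intX hbw n).const_mul _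
  calc ∫ ω, X ω * (r (n+1) ω - p) ∂μ
      = ∫ ω, (X ω * r (n+1) ω - p * X ω) ∂μ := integral_congr_ae (ae_of_all _ hpt3)
    _ = ∫ ω, X ω * r (n+1) ω ∂μ - ∫ ω, p * X ω ∂μ := integral_sub hfg' ic
    _ = (1 - lam (n+1)) * ∫ ω, (X ω)^2 ∂μ := by
        rw [integral_const_mul, hX0, h1, h2]; ring

lemma BW.vrec (hbw : Bandwagon μ p lam r) {n : ℕ} (hn : 1 ≤ n) :
    ∫ ω, (pbar r (n+1) ω - p)^2 ∂μ
      = ((n:ℝ) * (((n:ℝ)+2) - 2 * lam (n+1)) * ∫ ω, (pbar r n ω - p)^2 ∂μ + p*(1-p))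
        / ((n:ℝ)+1)^2 := by
  haveI := hbw.prob
  have hne : ((n:ℝ)+1) ≠ 0 := by positivity
  have hpt : ∀ ω, (pbar r (n+1) ω - p)^2
      = ((n:ℝ)^2 * (pbar r n ω - p)^2
        + 2*(n:ℝ) * ((pbar r n ω - p) * (r (n+1) ω - p))
        + (r (n+1) ω - p)^2) / ((n:ℝ)+1)^2 := by
    intro ω
    rw [BW.pbar_succ n ω]
    field_simp
    ring
  have hintXY : Integrable (fun ω => (pbar r n ω - p) * (r (n+1) ω - p)) μ := by
    refine BW.integrable_of_bdd (((BW.pbar_meas hbw.hmeas n).sub measurable_const).mul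
      ((hbw.hmeas (n+1)).sub measurable_const)) 4 fun ω => ?_
    obtain ⟨h0, h1⟩ := BW.pbar_mem hbw.hbin n ω
    obtain ⟨hp0, hp1⟩ := hbw.hp
    have hrb : 0 ≤ r (n+1) ω ∧ r (n+1) ω ≤ 1 := by
      rcases hbw.hbin (n+1) (by omega) ω with h | h <;> constructor <;> simp [h]
    rw [abs_le]; constructor <;> nlinarith [hrb.1, hrb.2]
  have hintY2 : Integrable (fun ω => (r (n+1) ω - p)^2) μ := by
    refine BW.integrable_of_bdd (((hbw.hmeas (n+1)).sub measurable_const).pow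
      measurable_const) 4 fun ω => ?_
    obtain ⟨hp0, hp1⟩ := hbw.hp
    have hrb : 0 ≤ r (n+1) ω ∧ r (n+1) ω ≤ 1 := by
      rcases hbw.hbin (n+1) (by omega) ω with h | h <;> constructor <;> simp [h]
    rw [abs_le]; constructor <;> nlinarith [hrb.1, hrb.2]
  have i1 : Integrable (fun ω => (n:ℝ)^2 * (pbar r n ω - p)^2) μ :=
    (BW.intXsq hbw n).const_mul _
  have i2 : Integrable (fun ω => 2*(n:ℝ) * ((pbar r n ω - p) * (r (n+1) ω - p))) μ :=
    hintXY.const_mul _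
  have i12 : Integrable (fun ω => (n:ℝ)^2 * (pbar r n ω - p)^2
      + 2*(n:ℝ) * ((pbar r n ω - p) * (r (n+1) ω - p))) μ := i1.add i2
  rw [integral_congr_ae (ae_of_all _ hpt), integral_div, integral_add i12 hintY2,
    integral_add i1 i2, integral_const_mul, integral_const_mul, BW.cross hbw hn,
    BW.int_sq hbw (show 1 ≤ n+1 by omega)]
  ring

end Main2

section Main3
variable {Ω : Type*} [m0 : MeasurableSpace Ω] {μ : Measure Ω} {p : ℝ} {lam : ℕ → ℝ}
  {r : ℕ → Ω → ℝ}

lemma BW.v1 (hbw : Bandwagon μ p lam r) : ∫ ω, (pbar r 1 ω - p)^2 ∂μ = p * (1-p) := by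
  have hpt : ∀ ω, (pbar r 1 ω - p)^2 = (r 1 ω - p)^2 := by
    intro ω; simp [pbar]
  rw [integral_congr_ae (ae_of_all _ hpt)]
  exact BW.int_sq hbw le_rfl

lemma BW.lam_le_one (hbw : Bandwagon μ p lam r) : ∀ n, 1 ≤ n → lam n ≤ 1 := by
  intro n hn
  induction n, hn using Nat.le_induction with
  | base => exact le_of_eq hbw.hlam1
  | succ n hn ih =>
    have h := hbw.hlam_mono (n+1) (by omega)
    simp only [Nat.add_sub_cancel] at h
    exact h.trans ih

lemma BW.vlow (hbw : Bandwagon μ p lam r) :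
    ∀ n : ℕ, 1 ≤ n →
      p*(1-p) * (((n:ℝ)+1)/(2*(n:ℝ))) * ∏ k ∈ Finset.Icc 2 n, (1 - 2*lam k/((k:ℝ)+1))
        ≤ ∫ ω, (pbar r n ω - p)^2 ∂μ := by
  intro n hn
  induction n, hn using Nat.le_induction with
  | base =>
    rw [Finset.Icc_eq_empty (by omega), Finset.prod_empty, BW.v1 hbw]
    norm_num
  | succ n hn ih =>
    obtain ⟨hp0, hp1⟩ := hbw.hp
    have hrec := BW.vrec hbw hn
    have hlm1 : lam (n+1) ≤ 1 := BW.lam_le_one hbw (n+1) (by omega)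
    have hlm0 : 0 ≤ lam (n+1) := hbw.hlam_nonneg (n+1) (by omega)
    have hn' : (1:ℝ) ≤ (n:ℝ) := by exact_mod_cast hn
    have hcoef : 0 ≤ (n:ℝ) * (((n:ℝ)+2) - 2 * lam (n+1)) := by nlinarith
    have hden : (0:ℝ) < ((n:ℝ)+1)^2 := by positivity
    have step1 : (n:ℝ) * (((n:ℝ)+2) - 2 * lam (n+1)) *
        (p*(1-p) * (((n:ℝ)+1)/(2*(n:ℝ))) * ∏ k ∈ Finset.Icc 2 n, (1 - 2*lam k/((k:ℝ)+1)))
        / ((n:ℝ)+1)^2 ≤ ∫ ω, (pbar r (n+1) ω - p)^2 ∂μ := by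
      rw [hrec]
      have h1 : (n:ℝ) * (((n:ℝ)+2) - 2 * lam (n+1)) *
          (p*(1-p) * (((n:ℝ)+1)/(2*(n:ℝ))) * ∏ k ∈ Finset.Icc 2 n, (1 - 2*lam k/((k:ℝ)+1)))
          ≤ (n:ℝ) * (((n:ℝ)+2) - 2 * lam (n+1)) * ∫ ω, (pbar r n ω - p)^2 ∂μ + p*(1-p) := by
        have h2 := mul_le_mul_of_nonneg_left ih hcoef
        nlinarith
      exact div_le_div_of_nonneg_right h1 hden.le
    refine le_trans (le_of_eq ?_) step1
    rw [Finset.prod_Icc_succ_top (show 2 ≤ n+1 by omega)]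
    have h0 : ((n:ℝ)) ≠ 0 := by positivity
    have h1 : ((n:ℝ)+1) ≠ 0 := by positivity
    have h2 : ((n:ℝ)+2) ≠ 0 := by positivity
    push_cast
    field_simp
    ring

lemma BW.exp_bound {a : ℝ} (h0 : 0 ≤ a) (h1 : a ≤ 2/3) : Real.exp (-(3*a)) ≤ 1 - a := by
  have he : 1 + 3*a ≤ Real.exp (3*a) := by
    have := Real.add_one_le_exp (3*a); linarith
  have hp : (0:ℝ) < 1 + 3*a := by linarith
  rw [Real.exp_neg]
  have h2 : (Real.exp (3*a))⁻¹ ≤ (1+3*a)⁻¹ := by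
    apply inv_anti₀ hp he
  refine h2.trans ?_
  rw [inv_eq_one_div, div_le_iff₀ hp]
  nlinarith

lemma BW.tele : ∀ n : ℕ, (∑ k ∈ Finset.Icc 2 n, (1/((k:ℝ)+1))^2) ≤ 1 := by
  have key : ∀ n : ℕ, 1 ≤ n →
      (∑ k ∈ Finset.Icc 2 n, (1/((k:ℝ)+1))^2) ≤ 1/2 - 1/((n:ℝ)+1) := by
    intro n hn
    induction n, hn using Nat.le_induction with
    | base =>
      rw [Finset.Icc_eq_empty (by omega), Finset.sum_empty]
      norm_num
    | succ n hn ih =>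
      rw [Finset.sum_Icc_succ_top (show 2 ≤ n+1 by omega)]
      have hn1 : (0:ℝ) < (n:ℝ)+1 := by positivity
      have hn2 : (0:ℝ) < (n:ℝ)+2 := by positivity
      have e : (1/((n:ℝ)+2))^2 ≤ 1/((n:ℝ)+1) - 1/((n:ℝ)+2) := by
        rw [div_sub_div _ _ hn1.ne' hn2.ne']
        rw [div_pow, one_pow, div_le_div_iff₀ (by positivity) (by positivity)]
        nlinarith
      push_cast
      have : ((n:ℝ)+1+1) = (n:ℝ)+2 := by ring
      rw [this]
      linarith
  intro n
  rcases Nat.lt_or_ge n 2 with h | h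
  · rw [Finset.Icc_eq_empty (by omega), Finset.sum_empty]; norm_num
  · have h1 := key n (by omega)
    have hn1 : (0:ℝ) < 1/((n:ℝ)+1) := by positivity
    linarith

lemma BW.prod_low (hbw : Bandwagon μ p lam r) {C : ℝ}
    (hC : ∀ n, (∑ i ∈ Finset.Icc 1 n, lam i ^ 2) ≤ C) :
    ∀ n, Real.exp (-(6 * Real.sqrt C)) ≤
      ∏ k ∈ Finset.Icc 2 n, (1 - 2*lam k/((k:ℝ)+1)) := by
  intro n
  have hC0 : 0 ≤ C := by
    have := hC 0
    simpa using this
  have habd : ∀ k ∈ Finset.Icc 2 n, 0 ≤ 2*lam k/((k:ℝ)+1) ∧ 2*lam k/((k:ℝ)+1) ≤ 2/3 := by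
    intro k hk
    obtain ⟨hk2, _⟩ := Finset.mem_Icc.mp hk
    have hlm0 : 0 ≤ lam k := hbw.hlam_nonneg k (by omega)
    have hlm1 : lam k ≤ 1 := BW.lam_le_one hbw k (by omega)
    have hk3 : (3:ℝ) ≤ (k:ℝ)+1 := by
      have : (2:ℝ) ≤ (k:ℝ) := by exact_mod_cast hk2
      linarith
    constructor
    · positivity
    · calc 2*lam k/((k:ℝ)+1) ≤ 2*1/((k:ℝ)+1) := by gcongr
      _ ≤ 2/3 := by rw [mul_one]; rw [div_le_div_iff₀ (by linarith) (by norm_num)]; linarith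
  have hfac : ∀ k ∈ Finset.Icc 2 n,
      Real.exp (-(3*(2*lam k/((k:ℝ)+1)))) ≤ 1 - 2*lam k/((k:ℝ)+1) := by
    intro k hk
    exact BW.exp_bound (habd k hk).1 (habd k hk).2
  have hprod : ∏ k ∈ Finset.Icc 2 n, Real.exp (-(3*(2*lam k/((k:ℝ)+1))))
      ≤ ∏ k ∈ Finset.Icc 2 n, (1 - 2*lam k/((k:ℝ)+1)) :=
    Finset.prod_le_prod (fun k _ => (Real.exp_pos _).le) hfac
  have hexp : ∏ k ∈ Finset.Icc 2 n, Real.exp (-(3*(2*lam k/((k:ℝ)+1))))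
      = Real.exp (∑ k ∈ Finset.Icc 2 n, -(3*(2*lam k/((k:ℝ)+1)))) :=
    (Real.exp_sum _ _).symm
  -- Cauchy-Schwarz bound on the sum
  set t := ∑ k ∈ Finset.Icc 2 n, lam k * (1/((k:ℝ)+1)) with ht
  have ht0 : 0 ≤ t := by
    apply Finset.sum_nonneg
    intro k hk
    have hk1 : 1 ≤ k := by have := (Finset.mem_Icc.mp hk).1; omega
    have := hbw.hlam_nonneg k hk1
    positivity
  have h1 : (∑ k ∈ Finset.Icc 2 n, lam k ^ 2) ≤ C :=
    le_trans (Finset.sum_le_sum_of_subset_of_nonneg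
      (Finset.Icc_subset_Icc_left (by omega)) (fun i _ _ => sq_nonneg _)) (hC n)
  have h2 : (∑ k ∈ Finset.Icc 2 n, (1/((k:ℝ)+1))^2) ≤ 1 := BW.tele n
  have hcs0 := Finset.sum_mul_sq_le_sq_mul_sq (Finset.Icc 2 n) lam (fun k => 1/((k:ℝ)+1))
  have ht2 : t^2 ≤ C := by
    calc t^2 ≤ (∑ k ∈ Finset.Icc 2 n, lam k ^ 2) * (∑ k ∈ Finset.Icc 2 n, (1/((k:ℝ)+1))^2) :=
        hcs0
    _ ≤ C * 1 := mul_le_mul h1 h2 (Finset.sum_nonneg fun _ _ => sq_nonneg _) hC0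
    _ = C := mul_one C
  have htsqrt : t ≤ Real.sqrt C := by
    calc t ≤ Real.sqrt (t^2) := by rw [Real.sqrt_sq ht0]
    _ ≤ Real.sqrt C := Real.sqrt_le_sqrt ht2
  have hsum : ∑ k ∈ Finset.Icc 2 n, -(3*(2*lam k/((k:ℝ)+1))) = -(6*t) := by
    have e : ∀ k ∈ Finset.Icc 2 n,
        -(3*(2*lam k/((k:ℝ)+1))) = (-6) * (lam k * (1/((k:ℝ)+1))) := by
      intro k _; ring
    rw [Finset.sum_congr rfl e, ← Finset.mul_sum, ht]
    ring
  have hstep : Real.exp (-(6 * Real.sqrt C)) ≤ Real.exp (-(6*t)) := by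
    refine Real.exp_le_exp.mpr ?_
    linarith
  calc Real.exp (-(6 * Real.sqrt C)) ≤ Real.exp (-(6*t)) := hstep
  _ = Real.exp (∑ k ∈ Finset.Icc 2 n, -(3*(2*lam k/((k:ℝ)+1)))) := by rw [hsum]
  _ = ∏ k ∈ Finset.Icc 2 n, Real.exp (-(3*(2*lam k/((k:ℝ)+1)))) := hexp.symm
  _ ≤ ∏ k ∈ Finset.Icc 2 n, (1 - 2*lam k/((k:ℝ)+1)) := hprod

end Main3

theorem bandwagon_consistency_necessary_condition {Ω : Type*} [MeasurableSpace Ω] (μ : MeasureTheory.Measure Ω)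
    (p : ℝ) (lam : ℕ → ℝ) (r : ℕ → Ω → ℝ)
    (hbw : Bandwagon μ p lam r)
    (hcons : ∀ ε : ℝ, 0 < ε →
      Filter.Tendsto (fun n : ℕ => μ {ω | ε < |pbar r n ω - p|})
        Filter.atTop (nhds 0)) :
    Filter.Tendsto (fun n : ℕ => ∑ i ∈ Finset.Icc 1 n, (lam i) ^ 2)
      Filter.atTop Filter.atTop := by
  classical
  haveI := hbw.prob
  obtain ⟨hp0, hp1⟩ := hbw.hp
  have hFmono : Monotone (fun n : ℕ => ∑ i ∈ Finset.Icc 1 n, (lam i) ^ 2) := by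
    intro a b hab
    exact Finset.sum_le_sum_of_subset_of_nonneg (Finset.Icc_subset_Icc_right hab)
      fun _ _ _ => sq_nonneg _
  rcases tendsto_of_monotone hFmono with h | ⟨l, hl⟩
  · exact h
  exfalso
  have hC : ∀ n, (∑ i ∈ Finset.Icc 1 n, lam i ^ 2) ≤ l := fun n =>
    hFmono.ge_of_tendsto hl n
  set δ := p*(1-p)*(1/2)*Real.exp (-(6*Real.sqrt l)) with hδdef
  have hpq : 0 < p*(1-p) := mul_pos hp0 (by linarith)
  have hδ : 0 < δ := by
    apply mul_pos (mul_pos hpq (by norm_num)) (Real.exp_pos _)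
  have hv : ∀ n : ℕ, 1 ≤ n → δ ≤ ∫ ω, (pbar r n ω - p)^2 ∂μ := by
    intro n hn
    have h1 := BW.vlow hbw n hn
    have h2 := BW.prod_low hbw hC n
    have hn' : (1:ℝ) ≤ (n:ℝ) := by exact_mod_cast hn
    have h3 : (1:ℝ)/2 ≤ ((n:ℝ)+1)/(2*(n:ℝ)) := by
      rw [div_le_div_iff₀ (by norm_num) (by positivity)]
      nlinarith
    have hmid : (1/2) * Real.exp (-(6*Real.sqrt l))
        ≤ (((n:ℝ)+1)/(2*(n:ℝ))) * ∏ k ∈ Finset.Icc 2 n, (1 - 2*lam k/((k:ℝ)+1)) :=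
      mul_le_mul h3 h2 (Real.exp_pos _).le (by positivity)
    have hδle : δ ≤ p*(1-p) * (((n:ℝ)+1)/(2*(n:ℝ)))
        * ∏ k ∈ Finset.Icc 2 n, (1 - 2*lam k/((k:ℝ)+1)) := by
      have := mul_le_mul_of_nonneg_left hmid hpq.le
      calc δ = p*(1-p) * ((1/2) * Real.exp (-(6*Real.sqrt l))) := by rw [hδdef]; ring
      _ ≤ p*(1-p) * ((((n:ℝ)+1)/(2*(n:ℝ))) * ∏ k ∈ Finset.Icc 2 n, (1 - 2*lam k/((k:ℝ)+1))) :=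
          this
      _ = p*(1-p) * (((n:ℝ)+1)/(2*(n:ℝ))) * ∏ k ∈ Finset.Icc 2 n, (1 - 2*lam k/((k:ℝ)+1)) := by
          ring
    exact hδle.trans h1
  set ε := Real.sqrt (δ/2) with hεdef
  have hε : 0 < ε := Real.sqrt_pos.mpr (by linarith)
  have hεsq : ε^2 = δ/2 := Real.sq_sqrt (by linarith)
  have htends := hcons ε hε
  have hof : (0:ENNReal) < ENNReal.ofReal (δ/4) := by
    rw [ENNReal.ofReal_pos]
    linarith
  have hev := htends.eventually_lt_const hof
  obtain ⟨n, hn⟩ := (hev.and (eventually_ge_atTop 1)).exists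
  obtain ⟨hnlt, hn1⟩ := hn
  set s := {ω | ε < |pbar r n ω - p|} with hsdef
  have hs : MeasurableSet s :=
    measurableSet_lt measurable_const ((BW.pbar_meas hbw.hmeas n).sub measurable_const).abs
  have hub : ∫ ω, (pbar r n ω - p)^2 ∂μ ≤ ε^2 + (μ s).toReal := by
    have hpt : ∀ ω, (pbar r n ω - p)^2 ≤ ε^2 + s.indicator (fun _ => (1:ℝ)) ω := by
      intro ω
      by_cases hω : ω ∈ s
      · rw [Set.indicator_of_mem hω]
        obtain ⟨h0, h1⟩ := BW.pbar_mem hbw.hbin n ω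
        nlinarith [sq_nonneg ε]
      · rw [Set.indicator_of_notMem hω]
        have hle : |pbar r n ω - p| ≤ ε := le_of_not_gt hω
        have := abs_nonneg (pbar r n ω - p)
        have h2 : (pbar r n ω - p)^2 = |pbar r n ω - p|^2 := (sq_abs _).symm
        nlinarith
    have hi : Integrable (fun ω => ε^2 + s.indicator (fun _ => (1:ℝ)) ω) μ :=
      (integrable_const _).add ((integrable_const (1:ℝ)).indicator hs)
    have := integral_mono (BW.intXsq hbw n) hi hpt
    refine this.trans (le_of_eq ?_)
    rw [integral_add (integrable_const _) ((integrable_const _).indicator hs),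
      integral_const]
    have e1 : ∫ ω, s.indicator (fun _ => (1:ℝ)) ω ∂μ = (μ s).toReal • (1:ℝ) :=
      integral_indicator_const (1:ℝ) hs
    rw [e1]
    simp
  have htor : (μ s).toReal < δ/4 := ENNReal.toReal_lt_of_lt_ofReal hnlt
  have hvn := hv n hn1
  linarith
end

section
/- The weighted affine estimator p̂_n = (Σ_{i=1}^n ω_i r̂_i)/(Σ_{i=1}^n ω_i), with λ̂_i = λ_i > 0 and positive weights ω_i, has variance Var[p̂_n] = (Σ ω_i)^{-2} Σ_{i=1}^n (ω_i²/λ_i²) ( p(1-p) - (1-λ_i)² Var[p̄_{i-1}] ). -/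
set_option linter.unusedSectionVars false


open MeasureTheory ProbabilityTheory Finset Filter

section Aux

variable {Ω : Type*} [MeasurableSpace Ω] {μ : MeasureTheory.Measure Ω}
  {p : ℝ} {lam : ℕ → ℝ} {r : ℕ → Ω → ℝ}

lemma BW.r_bd (hbw : Bandwagon μ p lam r) {i : ℕ} (hi : 1 ≤ i) (ω : Ω) :
    0 ≤ r i ω ∧ r i ω ≤ 1 := by
  rcases hbw.hbin i hi ω with h | h <;> simp [h]

lemma BW.pbar_bd (hbw : Bandwagon μ p lam r) (n : ℕ) (ω : Ω) :
    0 ≤ pbar r n ω ∧ pbar r n ω ≤ 1 := by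
  rcases Nat.eq_zero_or_pos n with hn | hn
  · simp [pbar, hn]
  · unfold pbar
    constructor
    · apply div_nonneg
      · exact Finset.sum_nonneg fun i hi => (BW.r_bd hbw (Finset.mem_Icc.1 hi).1 ω).1
      · positivity
    · rw [div_le_one (by positivity)]
      calc ∑ i ∈ Finset.Icc 1 n, r i ω ≤ ∑ i ∈ Finset.Icc 1 n, 1 :=
            Finset.sum_le_sum fun i hi => (BW.r_bd hbw (Finset.mem_Icc.1 hi).1 ω).2
        _ = n := by simp

lemma BW.pbar_meas_s17 (hbw : Bandwagon μ p lam r) (n : ℕ) : Measurable (pbar r n) := by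
  unfold pbar
  exact (Finset.measurable_sum _ fun i _ => hbw.hmeas i).div_const _

lemma BW.rhat_meas (hbw : Bandwagon μ p lam r) (i : ℕ) : Measurable (rhat r lam i) := by
  unfold rhat
  exact ((hbw.hmeas i).sub ((BW.pbar_meas_s17 hbw _).const_mul _)).div_const _

lemma BW.rhat_bd (hbw : Bandwagon μ p lam r) (hpos : ∀ i, 1 ≤ i → 0 < lam i)
    {i : ℕ} (hi : 1 ≤ i) (ω : Ω) : |rhat r lam i ω| ≤ (1 + |1 - lam i|) / lam i := by
  unfold rhat
  rw [abs_div, abs_of_pos (hpos i hi)]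
  have h1 := BW.r_bd hbw hi ω
  have h2 := BW.pbar_bd hbw (i - 1) ω
  have hnum : |r i ω - (1 - lam i) * pbar r (i - 1) ω| ≤ 1 + |1 - lam i| := by
    refine (abs_sub _ _).trans ?_
    rw [abs_mul]
    have h3 : |r i ω| ≤ 1 := abs_le.2 ⟨by linarith, h1.2⟩
    have h4 : |pbar r (i - 1) ω| ≤ 1 := abs_le.2 ⟨by linarith, h2.2⟩
    nlinarith [abs_nonneg (1 - lam i)]
  gcongr
  exact (hpos i hi).le

lemma BW.alg_le (hbw : Bandwagon μ p lam r) (n : ℕ) :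
    ratingsAlg r n ≤ ‹MeasurableSpace Ω› := by
  apply iSup₂_le
  intro i _
  exact (hbw.hmeas i).comap_le

lemma BW.r_meas_alg {n i : ℕ} (hi1 : 1 ≤ i) (hin : i ≤ n) :
    Measurable[ratingsAlg r n] (r i) :=
  measurable_iff_comap_le.mpr
    (le_iSup₂ (f := fun i (_ : i ∈ Finset.Icc 1 n) =>
      MeasurableSpace.comap (r i) (inferInstance : MeasurableSpace ℝ)) i
      (Finset.mem_Icc.2 ⟨hi1, hin⟩))

lemma BW.pbar_meas_alg {n k : ℕ} (hk : k ≤ n) :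
    Measurable[ratingsAlg r n] (pbar r k) := by
  unfold pbar
  refine Measurable.div_const (Finset.measurable_sum _ fun i hi => ?_) _
  exact BW.r_meas_alg (Finset.mem_Icc.1 hi).1 ((Finset.mem_Icc.1 hi).2.trans hk)

lemma BW.rhat_meas_alg {n i : ℕ} (hi1 : 1 ≤ i) (hin : i ≤ n) :
    Measurable[ratingsAlg r n] (rhat r lam i) := by
  unfold rhat
  exact ((BW.r_meas_alg hi1 hin).sub
    ((BW.pbar_meas_alg ((Nat.sub_le i 1).trans hin)).const_mul _)).div_const _

lemma memL2_of_bdd [IsProbabilityMeasure μ] {f : Ω → ℝ} (hf : Measurable f)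
    (C : ℝ) (hC : ∀ ω, |f ω| ≤ C) : MemLp f 2 μ :=
  (memLp_top_of_bound hf.aestronglyMeasurable C (ae_of_all _ hC)).mono_exponent le_top

lemma int_of_bdd [IsProbabilityMeasure μ] {f : Ω → ℝ} (hf : Measurable f)
    (C : ℝ) (hC : ∀ ω, |f ω| ≤ C) : Integrable f μ :=
  (memL2_of_bdd hf C hC).integrable one_le_two

lemma BW.r_int (hbw : Bandwagon μ p lam r) {i : ℕ} (hi : 1 ≤ i) : Integrable (r i) μ := by
  haveI := hbw.prob
  exact int_of_bdd (hbw.hmeas i) 1 fun ω =>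
    abs_le.2 ⟨by linarith [(BW.r_bd hbw hi ω).1], (BW.r_bd hbw hi ω).2⟩

lemma BW.pbar_int (hbw : Bandwagon μ p lam r) (k : ℕ) : Integrable (pbar r k) μ := by
  haveI := hbw.prob
  exact int_of_bdd (BW.pbar_meas_s17 hbw k) 1 fun ω =>
    abs_le.2 ⟨by linarith [(BW.pbar_bd hbw k ω).1], (BW.pbar_bd hbw k ω).2⟩

lemma BW.integral_mul_r (hbw : Bandwagon μ p lam r) {n : ℕ} (hn : 2 ≤ n)
    {X : Ω → ℝ} (hX : Measurable[ratingsAlg r (n - 1)] X) (C : ℝ) (hC : ∀ ω, |X ω| ≤ C) :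
    ∫ ω, X ω * r n ω ∂μ
      = (lam n * p) * ∫ ω, X ω ∂μ + (1 - lam n) * ∫ ω, X ω * pbar r (n - 1) ω ∂μ := by
  haveI := hbw.prob
  have hm : ratingsAlg r (n - 1) ≤ ‹MeasurableSpace Ω› := BW.alg_le hbw (n - 1)
  haveI : SigmaFinite (μ.trim hm) := by
    haveI := isFiniteMeasure_trim hm (μ := μ)
    infer_instance
  have hXm : Measurable X := hX.mono hm le_rfl
  have hXint : Integrable X μ := int_of_bdd hXm C hC
  have hrint : Integrable (r n) μ := BW.r_int hbw (by omega)
  have hbdX : ∃ C', ∀ ω, ‖X ω‖ ≤ C' := ⟨C, fun ω => hC ω⟩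
  have hXr : Integrable (fun ω => X ω * r n ω) μ :=
    hrint.bdd_mul hXm.aestronglyMeasurable (ae_of_all _ hbdX.choose_spec)
  have hXpb : Integrable (fun ω => X ω * pbar r (n - 1) ω) μ :=
    (BW.pbar_int hbw (n - 1)).bdd_mul hXm.aestronglyMeasurable (ae_of_all _ hbdX.choose_spec)
  have h1 : ∫ ω, X ω * r n ω ∂μ = ∫ ω, (μ[fun ω => X ω * r n ω | ratingsAlg r (n - 1)]) ω ∂μ :=
    (integral_condExp hm).symm
  have h2 : μ[fun ω => X ω * r n ω | ratingsAlg r (n - 1)]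
      =ᵐ[μ] fun ω => X ω * (μ[r n | ratingsAlg r (n - 1)]) ω := by
    have := condExp_mul_of_stronglyMeasurable_left (μ := μ) (f := X) (g := r n)
      hX.stronglyMeasurable hXr hrint
    filter_upwards [this] with ω hω using hω
  have h3 : (fun ω => X ω * (μ[r n | ratingsAlg r (n - 1)]) ω)
      =ᵐ[μ] fun ω => X ω * (lam n * p + (1 - lam n) * pbar r (n - 1) ω) := by
    filter_upwards [hbw.hcond n hn] with ω hω
    rw [hω]
  rw [h1, integral_congr_ae (h2.trans h3)]
  have key : ∀ ω, X ω * (lam n * p + (1 - lam n) * pbar r (n - 1) ω)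
      = (lam n * p) * X ω + (1 - lam n) * (X ω * pbar r (n - 1) ω) := fun ω => by ring
  simp_rw [key]
  rw [integral_add (hXint.const_mul _) (hXpb.const_mul _), integral_const_mul,
    integral_const_mul]

lemma BW.integral_mul_rhat (hbw : Bandwagon μ p lam r) (hpos : ∀ i, 1 ≤ i → 0 < lam i)
    {n : ℕ} (hn : 2 ≤ n) {X : Ω → ℝ} (hX : Measurable[ratingsAlg r (n - 1)] X)
    (C : ℝ) (hC : ∀ ω, |X ω| ≤ C) :
    ∫ ω, X ω * rhat r lam n ω ∂μ = p * ∫ ω, X ω ∂μ := by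
  haveI := hbw.prob
  have hl : lam n ≠ 0 := (hpos n (by omega)).ne'
  have hXm : Measurable X := hX.mono (BW.alg_le hbw (n - 1)) le_rfl
  have hbdX : ∃ C', ∀ ω, ‖X ω‖ ≤ C' := ⟨C, fun ω => hC ω⟩
  have hXr : Integrable (fun ω => X ω * r n ω) μ :=
    (BW.r_int hbw (by omega)).bdd_mul hXm.aestronglyMeasurable (ae_of_all _ hbdX.choose_spec)
  have hXpb : Integrable (fun ω => X ω * pbar r (n - 1) ω) μ :=
    (BW.pbar_int hbw (n - 1)).bdd_mul hXm.aestronglyMeasurable (ae_of_all _ hbdX.choose_spec)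
  have key : ∀ ω, X ω * rhat r lam n ω
      = (X ω * r n ω - (1 - lam n) * (X ω * pbar r (n - 1) ω)) / lam n := fun ω => by
    unfold rhat; field_simp
  simp_rw [key]
  rw [integral_div, integral_sub hXr (hXpb.const_mul _), integral_const_mul,
    BW.integral_mul_r hbw hn hX C hC]
  field_simp
  ring

lemma BW.integral_r (hbw : Bandwagon μ p lam r) : ∀ n, 1 ≤ n → ∫ ω, r n ω ∂μ = p := by
  intro n
  induction n using Nat.strong_induction_on with
  | _ n ih =>
    intro hn
    rcases eq_or_lt_of_le hn with h1 | hn2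
    · rw [← h1]; exact hbw.hfirst
    · haveI := hbw.prob
      have h := BW.integral_mul_r hbw (n := n) hn2 (X := fun _ => (1 : ℝ))
        measurable_const 1 (by simp)
      simp only [one_mul, integral_const, measure_univ, ENNReal.toReal_one, probReal_univ, smul_eq_mul,
        mul_one] at h
      have hpb : ∫ ω, pbar r (n - 1) ω ∂μ = p := by
        unfold pbar
        rw [integral_div, integral_finset_sum _
          (fun i hi => BW.r_int hbw (Finset.mem_Icc.1 hi).1)]
        rw [Finset.sum_congr rfl (fun i hi => ih i (by
          have := (Finset.mem_Icc.1 hi).2; omega) (Finset.mem_Icc.1 hi).1)]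
        rw [Finset.sum_const, Nat.card_Icc, nsmul_eq_mul]
        have hne : ((n - 1 + 1 - 1 : ℕ) : ℝ) ≠ 0 := Nat.cast_ne_zero.mpr (by omega)
        have heq : ((n - 1 + 1 - 1 : ℕ) : ℝ) = ((n - 1 : ℕ) : ℝ) := by norm_num
        rw [heq] at hne ⊢
        rw [mul_comm, mul_div_assoc, div_self hne, mul_one]
      rw [h, hpb]
      ring

lemma BW.integral_pbar (hbw : Bandwagon μ p lam r) {k : ℕ} (hk : 1 ≤ k) :
    ∫ ω, pbar r k ω ∂μ = p := by
  haveI := hbw.prob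
  unfold pbar
  rw [integral_div, integral_finset_sum _ (fun i hi => BW.r_int hbw (Finset.mem_Icc.1 hi).1),
    Finset.sum_congr rfl (fun i hi => BW.integral_r hbw i (Finset.mem_Icc.1 hi).1),
    Finset.sum_const, Nat.card_Icc, nsmul_eq_mul]
  have hne : ((k + 1 - 1 : ℕ) : ℝ) ≠ 0 := Nat.cast_ne_zero.mpr (by omega)
  have heq : ((k + 1 - 1 : ℕ) : ℝ) = (k : ℝ) := by norm_num
  rw [heq] at hne ⊢
  rw [mul_comm, mul_div_assoc, div_self hne, mul_one]

lemma BW.rhat_one (hbw : Bandwagon μ p lam r) : rhat r lam 1 = r 1 := by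
  funext ω
  simp [rhat, hbw.hlam1]

lemma BW.integral_rhat (hbw : Bandwagon μ p lam r) (hpos : ∀ i, 1 ≤ i → 0 < lam i)
    {n : ℕ} (hn : 1 ≤ n) : ∫ ω, rhat r lam n ω ∂μ = p := by
  haveI := hbw.prob
  rcases eq_or_lt_of_le hn with h1 | hn2
  · rw [← h1, BW.rhat_one hbw]; exact hbw.hfirst
  · have h := BW.integral_mul_rhat hbw hpos (n := n) hn2 (X := fun _ => (1 : ℝ))
      measurable_const 1 (by simp)
    simp only [one_mul, integral_const, measure_univ, ENNReal.toReal_one, probReal_univ, smul_eq_mul,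
      mul_one] at h
    exact h

lemma BW.integral_rhat_mul (hbw : Bandwagon μ p lam r) (hpos : ∀ i, 1 ≤ i → 0 < lam i)
    {i j : ℕ} (hi : 1 ≤ i) (hij : i < j) :
    ∫ ω, rhat r lam i ω * rhat r lam j ω ∂μ = p ^ 2 := by
  have hj2 : 2 ≤ j := by omega
  rw [BW.integral_mul_rhat hbw hpos hj2 (BW.rhat_meas_alg hi (by omega)) _
    (BW.rhat_bd hbw hpos hi), BW.integral_rhat hbw hpos hi]
  ring

lemma BW.rhat_memL2 (hbw : Bandwagon μ p lam r) (hpos : ∀ i, 1 ≤ i → 0 < lam i)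
    {n : ℕ} (hn : 1 ≤ n) : MemLp (rhat r lam n) 2 μ := by
  haveI := hbw.prob
  exact memL2_of_bdd (BW.rhat_meas hbw n) _ (BW.rhat_bd hbw hpos hn)

lemma BW.pbar_memL2 (hbw : Bandwagon μ p lam r) (k : ℕ) : MemLp (pbar r k) 2 μ := by
  haveI := hbw.prob
  exact memL2_of_bdd (BW.pbar_meas_s17 hbw k) 1 fun ω =>
    abs_le.2 ⟨by linarith [(BW.pbar_bd hbw k ω).1], (BW.pbar_bd hbw k ω).2⟩

lemma BW.variance_rhat (hbw : Bandwagon μ p lam r) (hpos : ∀ i, 1 ≤ i → 0 < lam i)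
    {n : ℕ} (hn : 1 ≤ n) :
    variance (rhat r lam n) μ
      = (1 / lam n ^ 2) * (p * (1 - p) - (1 - lam n) ^ 2 * variance (pbar r (n - 1)) μ) := by
  haveI := hbw.prob
  have hsq : (rhat r lam n) ^ 2 = fun ω => rhat r lam n ω * rhat r lam n ω := by
    funext ω; simp [sq]
  have hvd := variance_eq_sub (BW.rhat_memL2 hbw hpos hn)
  rw [hsq] at hvd
  have hErhat : ∫ ω, rhat r lam n ω ∂μ = p := BW.integral_rhat hbw hpos hn
  rw [hErhat] at hvd
  rcases eq_or_lt_of_le hn with h1 | hn2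
  · -- n = 1
    rw [← h1] at hvd ⊢
    rw [BW.rhat_one hbw] at hvd
    have hr2 : ∀ ω, r 1 ω * r 1 ω = r 1 ω := fun ω => by
      rcases hbw.hbin 1 le_rfl ω with h | h <;> rw [h] <;> ring
    simp_rw [hr2] at hvd
    rw [hbw.hfirst] at hvd
    rw [BW.rhat_one hbw, hvd, hbw.hlam1]
    ring
  · -- 2 ≤ n
    have hn2' : 2 ≤ n := hn2
    have hl : lam n ≠ 0 := (hpos n hn).ne'
    set c := 1 - lam n with hc
    set b := pbar r (n - 1) with hb
    set M := ∫ ω, b ω * b ω ∂μ with hM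
    have hbmeas : Measurable b := BW.pbar_meas_s17 hbw (n - 1)
    have hbbd : ∃ C', ∀ ω, ‖b ω‖ ≤ C' := ⟨1, fun ω =>
      abs_le.2 ⟨by linarith [(BW.pbar_bd hbw (n - 1) ω).1], (BW.pbar_bd hbw (n - 1) ω).2⟩⟩
    have hEb : ∫ ω, b ω ∂μ = p := BW.integral_pbar hbw (by omega)
    have hEbr : ∫ ω, b ω * r n ω ∂μ = (lam n * p) * p + c * M := by
      rw [BW.integral_mul_r hbw hn2' (BW.pbar_meas_alg le_rfl) 1 (fun ω =>
        abs_le.2 ⟨by linarith [(BW.pbar_bd hbw (n - 1) ω).1], (BW.pbar_bd hbw (n - 1) ω).2⟩),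
        hEb]
    -- pointwise expansion of rhat²
    have hr2 : ∀ ω, r n ω * r n ω = r n ω := fun ω => by
      rcases hbw.hbin n (by omega) ω with h | h <;> rw [h] <;> ring
    have key : ∀ ω, rhat r lam n ω * rhat r lam n ω
        = (r n ω - 2 * c * (b ω * r n ω) + c ^ 2 * (b ω * b ω)) / lam n ^ 2 := by
      intro ω
      have h0 : rhat r lam n ω * rhat r lam n ω
          = (r n ω * r n ω - 2 * c * (b ω * r n ω) + c ^ 2 * (b ω * b ω)) / lam n ^ 2 := by
        unfold rhat
        rw [div_mul_div_comm]
        congr 1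
        · ring
        · ring
      rw [h0, hr2 ω]
    simp_rw [key] at hvd
    -- integrate
    have hrint : Integrable (r n) μ := BW.r_int hbw (by omega)
    have hbr : Integrable (fun ω => b ω * r n ω) μ :=
      hrint.bdd_mul hbmeas.aestronglyMeasurable (ae_of_all _ hbbd.choose_spec)
    have hbb : Integrable (fun ω => b ω * b ω) μ :=
      (BW.pbar_int hbw (n - 1)).bdd_mul hbmeas.aestronglyMeasurable (ae_of_all _ hbbd.choose_spec)
    have hint1 : Integrable (fun a => r n a - 2 * c * (b a * r n a)) μ :=
      hrint.sub (hbr.const_mul _)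
    have hint2 : Integrable (fun a => c ^ 2 * (b a * b a)) μ := hbb.const_mul _
    have hint3 : Integrable (fun a => 2 * c * (b a * r n a)) μ := hbr.const_mul _
    rw [integral_div, integral_add hint1 hint2, integral_sub hrint hint3,
      integral_const_mul, integral_const_mul, BW.integral_r hbw n (by omega), hEbr] at hvd
    -- variance of b
    have hvb : variance b μ = M - p ^ 2 := by
      have hsqb : b ^ 2 = fun ω => b ω * b ω := by funext ω; simp [sq]
      rw [variance_eq_sub (BW.pbar_memL2 hbw (n - 1)), hsqb, hEb]
    rw [hvd, hvb]
    field_simp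
    have hM2 : ∫ a, b a ^ 2 ∂μ = M := by simp only [sq, hM]
    rw [hM2, hc]
    ring

end Aux

theorem affine_estimator_variance {Ω : Type*} [MeasurableSpace Ω] (μ : MeasureTheory.Measure Ω)
    (p : ℝ) (lam : ℕ → ℝ) (r : ℕ → Ω → ℝ)
    (hbw : Bandwagon μ p lam r)
    (hpos : ∀ i, 1 ≤ i → 0 < lam i) (w : ℕ → ℝ) (hw : ∀ i, 1 ≤ i → 0 < w i) :
    ∀ n, 1 ≤ n →
      variance (fun ω =>
          (∑ i ∈ Finset.Icc 1 n, w i * rhat r lam i ω) / ∑ i ∈ Finset.Icc 1 n, w i) μ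
        = (1 / (∑ i ∈ Finset.Icc 1 n, w i) ^ 2) *
            ∑ i ∈ Finset.Icc 1 n, (w i ^ 2 / lam i ^ 2) *
              (p * (1 - p) - (1 - lam i) ^ 2 * variance (pbar r (i - 1)) μ) := by
  intro n hn
  haveI := hbw.prob
  set s := Finset.Icc 1 n with hs
  have hmem : ∀ i ∈ s, 1 ≤ i := fun i hi => (Finset.mem_Icc.1 hi).1
  set W := ∑ i ∈ s, w i with hW_def
  have hW : 0 < W := Finset.sum_pos (fun i hi => hw i (hmem i hi))
    ⟨1, Finset.mem_Icc.2 ⟨le_rfl, hn⟩⟩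
  set S := fun ω => ∑ i ∈ s, w i * rhat r lam i ω with hS_def
  -- measurability and integrability
  have hrhat_meas := fun i => BW.rhat_meas hbw i
  have hrhat_int : ∀ i ∈ s, Integrable (rhat r lam i) μ := fun i hi =>
    (BW.rhat_memL2 hbw hpos (hmem i hi)).integrable one_le_two
  have hSmeas : Measurable S := Finset.measurable_sum _ fun i _ => (hrhat_meas i).const_mul _
  set B := ∑ i ∈ s, |w i| * ((1 + |1 - lam i|) / lam i) with hB_def
  have hSbd : ∀ ω, |S ω| ≤ B := by
    intro ω
    calc |S ω| ≤ ∑ i ∈ s, |w i * rhat r lam i ω| := Finset.abs_sum_le_sum_abs _ _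
      _ ≤ B := Finset.sum_le_sum fun i hi => by
          rw [abs_mul]
          exact mul_le_mul_of_nonneg_left (BW.rhat_bd hbw hpos (hmem i hi) ω) (abs_nonneg _)
  -- the estimator
  have hf_memL2 : MemLp (fun ω => S ω / W) 2 μ := by
    refine memL2_of_bdd (hSmeas.div_const _) (B / W) fun ω => ?_
    rw [abs_div, abs_of_pos hW]
    gcongr
    exact hSbd ω
  -- mean of S
  have hES : ∫ ω, S ω ∂μ = p * W := by
    rw [hS_def, integral_finset_sum _ (fun i hi => (hrhat_int i hi).const_mul _),
      Finset.sum_congr rfl fun i hi => by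
        rw [integral_const_mul, BW.integral_rhat hbw hpos (hmem i hi)],
      ← Finset.sum_mul, mul_comm]
  -- second moments matrix
  have hIoff : ∀ i ∈ s, ∀ j ∈ s, i ≠ j →
      ∫ ω, rhat r lam i ω * rhat r lam j ω ∂μ = p ^ 2 := by
    intro i hi j hj hne
    rcases lt_or_gt_of_ne hne with h | h
    · exact BW.integral_rhat_mul hbw hpos (hmem i hi) h
    · have : ∀ ω, rhat r lam i ω * rhat r lam j ω = rhat r lam j ω * rhat r lam i ω :=
        fun ω => mul_comm _ _
      simp_rw [this]
      exact BW.integral_rhat_mul hbw hpos (hmem j hj) h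
  have hIdiag : ∀ i ∈ s, ∫ ω, rhat r lam i ω * rhat r lam i ω ∂μ
      = variance (rhat r lam i) μ + p ^ 2 := by
    intro i hi
    have hsq : (rhat r lam i) ^ 2 = fun ω => rhat r lam i ω * rhat r lam i ω := by
      funext ω; simp [sq]
    have := variance_eq_sub (BW.rhat_memL2 hbw hpos (hmem i hi))
    rw [hsq, BW.integral_rhat hbw hpos (hmem i hi)] at this
    rw [this]; ring
  -- integral of S * S
  have hprod : ∀ i ∈ s, ∀ j ∈ s,
      Integrable (fun ω => w i * rhat r lam i ω * (w j * rhat r lam j ω)) μ := by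
    intro i hi j hj
    refine ((hrhat_int j hj).const_mul (w j)).bdd_mul
      ((hrhat_meas i).const_mul _).aestronglyMeasurable
      (ae_of_all _ fun ω => (?_ : ‖w i * rhat r lam i ω‖ ≤ |w i| * ((1 + |1 - lam i|) / lam i)))
    rw [Real.norm_eq_abs, abs_mul]
    exact mul_le_mul_of_nonneg_left (BW.rhat_bd hbw hpos (hmem i hi) ω) (abs_nonneg _)
  have hSS : ∫ ω, S ω * S ω ∂μ
      = ∑ i ∈ s, ∑ j ∈ s, w i * w j * ∫ ω, rhat r lam i ω * rhat r lam j ω ∂μ := by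
    have hexp : ∀ ω, S ω * S ω
        = ∑ i ∈ s, ∑ j ∈ s, w i * rhat r lam i ω * (w j * rhat r lam j ω) := fun ω => by
      rw [hS_def, Finset.sum_mul_sum]
    simp_rw [hexp]
    rw [integral_finset_sum _ (fun i hi => integrable_finset_sum _ (fun j hj => hprod i hi j hj))]
    refine Finset.sum_congr rfl fun i hi => ?_
    rw [integral_finset_sum _ (fun j hj => hprod i hi j hj)]
    refine Finset.sum_congr rfl fun j hj => ?_
    have hcomm : ∀ ω, w i * rhat r lam i ω * (w j * rhat r lam j ω)
        = w i * w j * (rhat r lam i ω * rhat r lam j ω) := fun ω => by ring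
    simp_rw [hcomm]
    rw [integral_const_mul]
  -- reduce to diagonal
  have hdiag : ∀ i ∈ s,
      ∑ j ∈ s, (w i * w j * ∫ ω, rhat r lam i ω * rhat r lam j ω ∂μ - w i * w j * p ^ 2)
        = w i ^ 2 * variance (rhat r lam i) μ := by
    intro i hi
    rw [Finset.sum_eq_single_of_mem i hi]
    · rw [hIdiag i hi]; ring
    · intro j hj hne
      rw [hIoff i hi j hj (fun h => hne h.symm)]
      ring
  have hSS2 : ∫ ω, S ω * S ω ∂μ
      = (∑ i ∈ s, ∑ j ∈ s, w i * w j * p ^ 2) + ∑ i ∈ s, w i ^ 2 * variance (rhat r lam i) μ := by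
    rw [hSS]
    rw [← Finset.sum_congr rfl hdiag]
    rw [← Finset.sum_add_distrib]
    refine Finset.sum_congr rfl fun i hi => ?_
    rw [Finset.sum_sub_distrib]
    ring
  have hWW : ∑ i ∈ s, ∑ j ∈ s, w i * w j * p ^ 2 = W * W * p ^ 2 := by
    have h1 : ∀ i ∈ s, ∑ j ∈ s, w i * w j * p ^ 2 = (∑ j ∈ s, w i * w j) * p ^ 2 := fun i _ => by
      rw [Finset.sum_mul]
    rw [Finset.sum_congr rfl h1, ← Finset.sum_mul, ← Finset.sum_mul_sum]
  -- compute variance of estimator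
  have hvd := variance_eq_sub hf_memL2
  have hfsq : (fun ω => S ω / W) ^ 2 = fun ω => (S ω * S ω) / (W * W) := by
    funext ω
    simp only [Pi.pow_apply]
    rw [div_pow, sq, sq]
  rw [hfsq] at hvd
  rw [show (fun ω => (∑ i ∈ s, w i * rhat r lam i ω) / W) = fun ω => S ω / W from rfl] at *
  rw [hvd, integral_div, hSS2, hWW]
  have hIf : ∫ ω, S ω / W ∂μ = p := by
    rw [integral_div, hES, mul_div_assoc, div_self hW.ne', mul_one]
  rw [hIf]
  have hvr : ∑ i ∈ s, w i ^ 2 * variance (rhat r lam i) μ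
      = ∑ i ∈ s, (w i ^ 2 / lam i ^ 2) *
          (p * (1 - p) - (1 - lam i) ^ 2 * variance (pbar r (i - 1)) μ) := by
    refine Finset.sum_congr rfl fun i hi => ?_
    rw [BW.variance_rhat hbw hpos (hmem i hi)]
    ring
  rw [hvr]
  have hW2 : W ^ 2 = W * W := sq W
  rw [hW2]
  field_simp
  ring
end
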